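/- Let J: (a, ρ) ↦ (s_{11}(a,ρ), s_{12}(a,ρ)) be the map defined on {(a,ρ) : a > 0, |ρ| < 1, (a,ρ) ≠ (1,0)} by taking s_{11} and s_{12} to be the (1,1) and (1,2) entries of V_0^{1/2} / trace(V_0^{1/2}), where V_0 is the 2×2 matrix with rows (a, ρ) and (ρ, 1/a) and V_0^{1/2} is its positive definite square root. Then J is differentiable at every point of its domain and the determinant of its total derivative (Jacobian determinant) at (a, ρ) equals a √(1−ρ²) / ( (a² + 1) √(1−ρ²) + 2a(1−ρ²) )². In particular the Jacobian determinant is strictly positive, so the derivative of J is invertible everywhere on the domain. -/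

import Mathlib

set_option maxHeartbeats 1000000

open Real

/-- The map J : (a, ρ) ↦ (s₁₁(a,ρ), s₁₂(a,ρ)) giving the (1,1) and (1,2) entries of
V₀^{1/2}/trace(V₀^{1/2}) for V₀ = [[a,ρ],[ρ,1/a]], written out explicitly: with
q = 4a²ρ² + (a²−1)², k = a²+1+√q, m = a²+1−√q,
s₁₁ = [√k(4a²ρ² + √q(a²−1) + (a²−1)²) + √m(4a²ρ² − √q(a²−1) + (a²−1)²)]/(2q(√m+√k)),
s₁₂ = aρ(√k−√m)²/(2q). -/
noncomputable def Jmap : ℝ × ℝ → ℝ × ℝ := fun z =>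
  let a := z.1
  let ρ := z.2
  let q := 4 * a ^ 2 * ρ ^ 2 + (a ^ 2 - 1) ^ 2
  let k := a ^ 2 + 1 + Real.sqrt q
  let m := a ^ 2 + 1 - Real.sqrt q
  ((Real.sqrt k * (4 * a ^ 2 * ρ ^ 2 + Real.sqrt q * (a ^ 2 - 1) + (a ^ 2 - 1) ^ 2)
      + Real.sqrt m * (4 * a ^ 2 * ρ ^ 2 - Real.sqrt q * (a ^ 2 - 1) + (a ^ 2 - 1) ^ 2))
    / (2 * q * (Real.sqrt m + Real.sqrt k)),
   a * ρ * (Real.sqrt k - Real.sqrt m) ^ 2 / (2 * q))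

noncomputable def Gmap : ℝ × ℝ → ℝ × ℝ := fun z =>
  ((z.1 ^ 2 + z.1 * Real.sqrt (1 - z.2 ^ 2)) * (z.1 ^ 2 + 1 + 2 * z.1 * Real.sqrt (1 - z.2 ^ 2))⁻¹,
   z.1 * z.2 * (z.1 ^ 2 + 1 + 2 * z.1 * Real.sqrt (1 - z.2 ^ 2))⁻¹)

lemma det_helper (f : ℝ × ℝ →L[ℝ] ℝ × ℝ) (p11 p12 p21 p22 : ℝ)
    (h : ∀ v : ℝ × ℝ, f v = (p11 * v.1 + p12 * v.2, p21 * v.1 + p22 * v.2)) :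
    LinearMap.det (f : ℝ × ℝ →ₗ[ℝ] ℝ × ℝ) = p11 * p22 - p12 * p21 := by
  have hf : (f : ℝ × ℝ →ₗ[ℝ] ℝ × ℝ)
      = Matrix.toLin (Module.Basis.finTwoProd ℝ) (Module.Basis.finTwoProd ℝ) !![p11, p12; p21, p22] := by
    apply LinearMap.ext
    intro v
    rw [Matrix.toLin_finTwoProd_apply]
    exact h v
  rw [hf, LinearMap.det_toLin]
  simp [Matrix.det_fin_two_of]

lemma Jmap_eq (a ρ : ℝ) (ha : 0 < a) (hρ : ρ ^ 2 < 1) (hne : ¬(a = 1 ∧ ρ = 0)) :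
    Jmap (a, ρ) = Gmap (a, ρ) := by
  have hu2 : Real.sqrt (1 - ρ ^ 2) ^ 2 = 1 - ρ ^ 2 := Real.sq_sqrt (by nlinarith)
  set u := Real.sqrt (1 - ρ ^ 2) with hu
  have hu0 : 0 < u := Real.sqrt_pos.mpr (by nlinarith)
  have hq0 : 0 < 4 * a ^ 2 * ρ ^ 2 + (a ^ 2 - 1) ^ 2 := by
    rcases eq_or_ne a 1 with h | h
    · have hρ0 : ρ ≠ 0 := fun h0 => hne ⟨h, h0⟩
      have : 0 < ρ ^ 2 := by positivity
      subst h; nlinarith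
    · have h2 : a ^ 2 - 1 ≠ 0 := by
        intro hh
        rcases mul_eq_zero.mp (show (a - 1) * (a + 1) = 0 by linear_combination hh) with h3 | h3
        · exact h (by linarith)
        · linarith
      have : 0 < (a ^ 2 - 1) ^ 2 := by positivity
      nlinarith [sq_nonneg (a * ρ)]
  have hsq2 : Real.sqrt (4 * a ^ 2 * ρ ^ 2 + (a ^ 2 - 1) ^ 2) ^ 2
      = 4 * a ^ 2 * ρ ^ 2 + (a ^ 2 - 1) ^ 2 := Real.sq_sqrt hq0.le
  set s := Real.sqrt (4 * a ^ 2 * ρ ^ 2 + (a ^ 2 - 1) ^ 2) with hs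
  have hs0 : 0 < s := Real.sqrt_pos.mpr hq0
  have h4a : 4 * a ^ 2 * ρ ^ 2 < 4 * a ^ 2 := by nlinarith [mul_lt_mul_of_pos_left hρ (show (0:ℝ) < 4 * a ^ 2 by positivity)]
  have hslt : s < a ^ 2 + 1 := by nlinarith [hsq2, hs0.le, h4a]
  have hk0 : (0:ℝ) < a ^ 2 + 1 + s := by nlinarith
  have hm0 : (0:ℝ) < a ^ 2 + 1 - s := by linarith
  set sk := Real.sqrt (a ^ 2 + 1 + s) with hskdef
  set sm := Real.sqrt (a ^ 2 + 1 - s) with hsmdef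
  have hsk2 : sk ^ 2 = a ^ 2 + 1 + s := Real.sq_sqrt hk0.le
  have hsm2 : sm ^ 2 = a ^ 2 + 1 - s := Real.sq_sqrt hm0.le
  have hsk0 : 0 < sk := Real.sqrt_pos.mpr hk0
  have hsm0 : 0 < sm := Real.sqrt_pos.mpr hm0
  have hkm : sk * sm = 2 * (a * u) := by
    rw [hskdef, hsmdef, ← Real.sqrt_mul hk0.le]
    rw [show (a ^ 2 + 1 + s) * (a ^ 2 + 1 - s) = (2 * (a * u)) ^ 2 by
      linear_combination (-1 : ℝ) * hsq2 - 4 * a ^ 2 * hu2]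
    exact Real.sqrt_sq (by positivity)
  have hD0 : (0:ℝ) < a ^ 2 + 1 + 2 * a * u := by positivity
  have hJ : Jmap (a, ρ)
      = ((sk * (4 * a ^ 2 * ρ ^ 2 + s * (a ^ 2 - 1) + (a ^ 2 - 1) ^ 2)
          + sm * (4 * a ^ 2 * ρ ^ 2 - s * (a ^ 2 - 1) + (a ^ 2 - 1) ^ 2))
        / (2 * (4 * a ^ 2 * ρ ^ 2 + (a ^ 2 - 1) ^ 2) * (sm + sk)),
        a * ρ * (sk - sm) ^ 2 / (2 * (4 * a ^ 2 * ρ ^ 2 + (a ^ 2 - 1) ^ 2))) := rfl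
  have hG : Gmap (a, ρ)
      = ((a ^ 2 + a * u) * (a ^ 2 + 1 + 2 * a * u)⁻¹,
         a * ρ * (a ^ 2 + 1 + 2 * a * u)⁻¹) := rfl
  rw [hJ, hG]
  have hsksm : 0 < sm + sk := by linarith
  rw [Prod.mk.injEq]
  constructor
  · field_simp
    apply mul_right_cancel₀ (ne_of_gt hsksm)
    linear_combination
      (((a ^ 2 + 1 + 2 * a * u) * (4 * a ^ 2 * ρ ^ 2 + (a ^ 2 - 1) ^ 2)
          - 2 * (4 * a ^ 2 * ρ ^ 2 + (a ^ 2 - 1) ^ 2) * (a ^ 2 + a * u)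
          + (a ^ 2 + 1 + 2 * a * u) * s * (a ^ 2 - 1)) * hsk2)
      + (((a ^ 2 + 1 + 2 * a * u) * (4 * a ^ 2 * ρ ^ 2 + (a ^ 2 - 1) ^ 2)
          - 2 * (4 * a ^ 2 * ρ ^ 2 + (a ^ 2 - 1) ^ 2) * (a ^ 2 + a * u)
          - (a ^ 2 + 1 + 2 * a * u) * s * (a ^ 2 - 1)) * hsm2)
      + ((2 * ((a ^ 2 + 1 + 2 * a * u) * (4 * a ^ 2 * ρ ^ 2 + (a ^ 2 - 1) ^ 2)
          - 2 * (4 * a ^ 2 * ρ ^ 2 + (a ^ 2 - 1) ^ 2) * (a ^ 2 + a * u))) * hkm)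
      + ((2 * (a ^ 2 + 1 + 2 * a * u) * (a ^ 2 - 1)) * hsq2)
  · field_simp [hq0.ne']
    rw [div_eq_iff (ne_of_gt (by linarith [hq0]))]
    linear_combination (ρ * (a ^ 2 + 1 + 2 * a * u)) * hsk2
      + (ρ * (a ^ 2 + 1 + 2 * a * u)) * hsm2
      - (2 * ρ * (a ^ 2 + 1 + 2 * a * u)) * hkm - 8 * a ^ 2 * ρ * hu2


/-- On the domain {(a,ρ) : a > 0, |ρ| < 1, (a,ρ) ≠ (1,0)}, the map J is
differentiable, its Jacobian determinant at (a,ρ) equals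
a √(1−ρ²) / ((a²+1)√(1−ρ²) + 2a(1−ρ²))², and in particular this determinant is
strictly positive, so the derivative of J is invertible everywhere on the domain. -/
theorem Jmap_differentiable_jacobian
    (a ρ : ℝ) (ha : 0 < a) (hρ₁ : -1 < ρ) (hρ₂ : ρ < 1) (hne : (a, ρ) ≠ (1, 0)) :
    DifferentiableAt ℝ Jmap (a, ρ) ∧
    LinearMap.det ((fderiv ℝ Jmap (a, ρ) : ℝ × ℝ →L[ℝ] ℝ × ℝ) : ℝ × ℝ →ₗ[ℝ] ℝ × ℝ)
      = a * Real.sqrt (1 - ρ ^ 2)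
        / ((a ^ 2 + 1) * Real.sqrt (1 - ρ ^ 2) + 2 * a * (1 - ρ ^ 2)) ^ 2 ∧
    0 < LinearMap.det ((fderiv ℝ Jmap (a, ρ) : ℝ × ℝ →L[ℝ] ℝ × ℝ) : ℝ × ℝ →ₗ[ℝ] ℝ × ℝ) := by
  have hρ : ρ ^ 2 < 1 := by nlinarith
  have hu2 : Real.sqrt (1 - ρ ^ 2) ^ 2 = 1 - ρ ^ 2 := Real.sq_sqrt (by nlinarith)
  set u := Real.sqrt (1 - ρ ^ 2) with hu
  have hu0 : 0 < u := Real.sqrt_pos.mpr (by nlinarith)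
  have hD0 : (0:ℝ) < a ^ 2 + 1 + 2 * a * u := by positivity
  have hdne : (a ^ 2 + 1 + 2 * a * u) ≠ 0 := ne_of_gt hD0
  -- eventual equality of Jmap and Gmap
  have hmem : {z : ℝ × ℝ | 0 < z.1 ∧ z.2 ^ 2 < 1 ∧ z ≠ ((1:ℝ), (0:ℝ))} ∈ nhds (a, ρ) := by
    apply IsOpen.mem_nhds
    · exact (isOpen_lt continuous_const continuous_fst).inter
        ((isOpen_lt ((continuous_pow 2).comp continuous_snd) continuous_const).inter isOpen_ne)
    · exact ⟨ha, hρ, hne⟩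
  have heq : Jmap =ᶠ[nhds (a, ρ)] Gmap := by
    filter_upwards [hmem] with z hz
    have := Jmap_eq z.1 z.2 hz.1 hz.2.1 (by
      intro ⟨h1, h2⟩
      exact hz.2.2 (by rw [← Prod.mk.eta (p := z), h1, h2]))
    simpa using this
  -- derivative of Gmap
  have hin : HasDerivAt (fun t : ℝ => 1 - t ^ 2) (-(2 * ρ ^ 1)) ρ := by
    simpa using (hasDerivAt_pow 2 ρ).const_sub 1
  have hs1 : HasDerivAt (fun t : ℝ => Real.sqrt (1 - t ^ 2))
      (1 / (2 * u) * -(2 * ρ ^ 1)) ρ := by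
    have := (Real.hasDerivAt_sqrt (show 1 - ρ ^ 2 ≠ 0 by nlinarith)).comp ρ hin
    simpa [Function.comp_def, ← hu] using this
  have hw : HasFDerivAt (fun z : ℝ × ℝ => Real.sqrt (1 - z.2 ^ 2))
      ((1 / (2 * u) * -(2 * ρ ^ 1)) • ContinuousLinearMap.snd ℝ ℝ ℝ) (a, ρ) :=
    hs1.comp_hasFDerivAt (f := Prod.snd) (a, ρ) hasFDerivAt_snd
  have hsq : HasFDerivAt (fun z : ℝ × ℝ => z.1 ^ 2)
      ((2 * a ^ 1 : ℝ) • ContinuousLinearMap.fst ℝ ℝ ℝ) (a, ρ) := by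
    have := (hasDerivAt_pow 2 a).comp_hasFDerivAt (a, ρ) (hasFDerivAt_fst (𝕜 := ℝ))
    simpa [Function.comp_def] using this
  have hden : HasFDerivAt (fun z : ℝ × ℝ => z.1 ^ 2 + 1 + 2 * z.1 * Real.sqrt (1 - z.2 ^ 2))
      (((2 * a ^ 1 : ℝ) • ContinuousLinearMap.fst ℝ ℝ ℝ)
        + ((2 * a) • ((1 / (2 * u) * -(2 * ρ ^ 1)) • ContinuousLinearMap.snd ℝ ℝ ℝ)
            + u • ((2:ℝ) • ContinuousLinearMap.fst ℝ ℝ ℝ))) (a, ρ) :=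
    (hsq.add_const 1).add (((hasFDerivAt_fst (𝕜 := ℝ)).const_mul 2).mul hw)
  have hinv : HasFDerivAt
      (fun z : ℝ × ℝ => (z.1 ^ 2 + 1 + 2 * z.1 * Real.sqrt (1 - z.2 ^ 2))⁻¹)
      ((-((a ^ 2 + 1 + 2 * a * u) ^ 2)⁻¹) •
        (((2 * a ^ 1 : ℝ) • ContinuousLinearMap.fst ℝ ℝ ℝ)
        + ((2 * a) • ((1 / (2 * u) * -(2 * ρ ^ 1)) • ContinuousLinearMap.snd ℝ ℝ ℝ)
            + u • ((2:ℝ) • ContinuousLinearMap.fst ℝ ℝ ℝ)))) (a, ρ) :=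
    (hasDerivAt_inv hdne).comp_hasFDerivAt (a, ρ) hden
  have hnum1 : HasFDerivAt (fun z : ℝ × ℝ => z.1 ^ 2 + z.1 * Real.sqrt (1 - z.2 ^ 2))
      (((2 * a ^ 1 : ℝ) • ContinuousLinearMap.fst ℝ ℝ ℝ)
        + (a • ((1 / (2 * u) * -(2 * ρ ^ 1)) • ContinuousLinearMap.snd ℝ ℝ ℝ)
            + u • ContinuousLinearMap.fst ℝ ℝ ℝ)) (a, ρ) :=
    hsq.add ((hasFDerivAt_fst (𝕜 := ℝ)).mul hw)
  have hnum2 : HasFDerivAt (fun z : ℝ × ℝ => z.1 * z.2)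
      (a • ContinuousLinearMap.snd ℝ ℝ ℝ + ρ • ContinuousLinearMap.fst ℝ ℝ ℝ) (a, ρ) := by
    have := (hasFDerivAt_fst (𝕜 := ℝ) (p := ((a, ρ) : ℝ × ℝ))).mul (hasFDerivAt_snd (𝕜 := ℝ) (p := ((a, ρ) : ℝ × ℝ)))
    simpa [Pi.mul_def] using this
  have hg1 := hnum1.mul hinv
  have hg2 := hnum2.mul hinv
  have hG := hg1.prodMk hg2
  have hGmap : HasFDerivAt Gmap _ (a, ρ) := hG
  have hdiffG : DifferentiableAt ℝ Gmap (a, ρ) := hGmap.differentiableAt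
  have hdiffJ : DifferentiableAt ℝ Jmap (a, ρ) := hdiffG.congr_of_eventuallyEq heq
  have hfd : fderiv ℝ Jmap (a, ρ) = fderiv ℝ Gmap (a, ρ) := heq.fderiv_eq
  have hdet := det_helper (fderiv ℝ Gmap (a, ρ))
      ((2 * a + (a ^ 2 + 1) * u) / (a ^ 2 + 1 + 2 * a * u) ^ 2)
      (a * ρ * (a ^ 2 - 1) / (u * (a ^ 2 + 1 + 2 * a * u) ^ 2))
      (ρ * (1 - a ^ 2) / (a ^ 2 + 1 + 2 * a * u) ^ 2)
      (a * (u * (a ^ 2 + 1 + 2 * a * u) + 2 * a * ρ ^ 2) / (u * (a ^ 2 + 1 + 2 * a * u) ^ 2))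
      (by
        intro v
        rw [hGmap.fderiv]
        simp only [ContinuousLinearMap.prod_apply, ContinuousLinearMap.add_apply,
          ContinuousLinearMap.smul_apply, ContinuousLinearMap.coe_fst',
          ContinuousLinearMap.coe_snd', smul_eq_mul, ContinuousLinearMap.neg_apply]
        rw [Prod.mk.injEq]
        constructor
        · field_simp
          ring
        · field_simp
          ring)
  have hbase : (0:ℝ) < (a ^ 2 + 1) * u + 2 * a * (1 - ρ ^ 2) := by
    have h1 : (0:ℝ) < (a ^ 2 + 1) * u := by positivity
    nlinarith [mul_pos ha (show (0:ℝ) < 1 - ρ ^ 2 by nlinarith)]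
  have hval : (2 * a + (a ^ 2 + 1) * u) / (a ^ 2 + 1 + 2 * a * u) ^ 2
        * (a * (u * (a ^ 2 + 1 + 2 * a * u) + 2 * a * ρ ^ 2) / (u * (a ^ 2 + 1 + 2 * a * u) ^ 2))
      - a * ρ * (a ^ 2 - 1) / (u * (a ^ 2 + 1 + 2 * a * u) ^ 2)
        * (ρ * (1 - a ^ 2) / (a ^ 2 + 1 + 2 * a * u) ^ 2)
      = a * u / ((a ^ 2 + 1) * u + 2 * a * (1 - ρ ^ 2)) ^ 2 := by
    rw [div_mul_div_comm, div_mul_div_comm, div_sub_div _ _ (by positivity) (by positivity),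
      div_eq_div_iff (by positivity) (by positivity)]
    linear_combination (a * u ^ 3 + 10 * a ^ 2 * u ^ 4 + (-4) * a ^ 2 * ρ ^ 2 * u ^ 2 + (-4) * a ^ 3 * u ^ 3 + 40 * a ^ 3 * u ^ 5 + (-4) * a ^ 3 * ρ ^ 2 * u + (-40) * a ^ 3 * ρ ^ 2 * u ^ 3 + 4 * a ^ 3 * ρ ^ 4 * u + (-8) * a ^ 4 * u ^ 2 + (-58) * a ^ 4 * u ^ 4 + 80 * a ^ 4 * u ^ 6 + (-60) * a ^ 4 * ρ ^ 2 * u ^ 2 + (-160) * a ^ 4 * ρ ^ 2 * u ^ 4 + 40 * a ^ 4 * ρ ^ 4 * u ^ 2 + (-124) * a ^ 5 * u ^ 3 + (-320) * a ^ 5 * u ^ 5 + 80 * a ^ 5 * u ^ 7 + (-24) * a ^ 5 * ρ ^ 2 * u + (-320) * a ^ 5 * ρ ^ 2 * u ^ 3 + (-320) * a ^ 5 * ρ ^ 2 * u ^ 5 + 24 * a ^ 5 * ρ ^ 4 * u + 160 * a ^ 5 * ρ ^ 4 * u ^ 3 + (-40) * a ^ 6 * u ^ 2 + (-750) * a ^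 6 * u ^ 4 + (-880) * a ^ 6 * u ^ 6 + 32 * a ^ 6 * u ^ 8 + (-244) * a ^ 6 * ρ ^ 2 * u ^ 2 + (-800) * a ^ 6 * ρ ^ 2 * u ^ 4 + (-320) * a ^ 6 * ρ ^ 2 * u ^ 6 + 200 * a ^ 6 * ρ ^ 4 * u ^ 2 + 320 * a ^ 6 * ρ ^ 4 * u ^ 4 + (-444) * a ^ 7 * u ^ 3 + (-2280) * a ^ 7 * u ^ 5 + (-1280) * a ^ 7 * u ^ 7 + (-60) * a ^ 7 * ρ ^ 2 * u + (-920) * a ^ 7 * ρ ^ 2 * u ^ 3 + (-960) * a ^ 7 * ρ ^ 2 * u ^ 5 + (-128) * a ^ 7 * ρ ^ 2 * u ^ 7 + 60 * a ^ 7 * ρ ^ 4 * u + 640 * a ^ 7 * ρ ^ 4 * u ^ 3 + 320 * a ^ 7 * ρ ^ 4 * u ^ 5 + (-80) * a ^ 8 * u ^ 2 + (-1890) * a ^ 8 * u ^ 4 + (-3680) * a ^ 8 * u ^ 6 + (-928) * a ^ 8 * u ^ 8 + (-460) * a ^ 8 * ρ ^ 2 * u ^ 2 + (-1600) * a ^ 8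 * ρ ^ 2 * u ^ 4 + (-448) * a ^ 8 * ρ ^ 2 * u ^ 6 + 400 * a ^ 8 * ρ ^ 4 * u ^ 2 + 960 * a ^ 8 * ρ ^ 4 * u ^ 4 + 128 * a ^ 8 * ρ ^ 4 * u ^ 6 + (-650) * a ^ 9 * u ^ 3 + (-3840) * a ^ 9 * u ^ 5 + (-2976) * a ^ 9 * u ^ 7 + (-256) * a ^ 9 * u ^ 9 + (-80) * a ^ 9 * ρ ^ 2 * u + (-1280) * a ^ 9 * ρ ^ 2 * u ^ 3 + (-1280) * a ^ 9 * ρ ^ 2 * u ^ 5 + 80 * a ^ 9 * ρ ^ 4 * u + 960 * a ^ 9 * ρ ^ 4 * u ^ 3 + 640 * a ^ 9 * ρ ^ 4 * u ^ 5 + (-80) * a ^ 10 * u ^ 2 + (-1890) * a ^ 10 * u ^ 4 + (-3680) * a ^ 10 * u ^ 6 + (-928) * a ^ 10 * u ^ 8 + (-460) * a ^ 10 * ρ ^ 2 * u ^ 2 + (-1600) * a ^ 10 * ρ ^ 2 * u ^ 4 + (-448) * a ^ 10 * ρ ^ 2 * u ^ 6 + 400 * a ^ 10 * ρ ^ 4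 * u ^ 2 + 960 * a ^ 10 * ρ ^ 4 * u ^ 4 + 128 * a ^ 10 * ρ ^ 4 * u ^ 6 + (-444) * a ^ 11 * u ^ 3 + (-2280) * a ^ 11 * u ^ 5 + (-1280) * a ^ 11 * u ^ 7 + (-60) * a ^ 11 * ρ ^ 2 * u + (-920) * a ^ 11 * ρ ^ 2 * u ^ 3 + (-960) * a ^ 11 * ρ ^ 2 * u ^ 5 + (-128) * a ^ 11 * ρ ^ 2 * u ^ 7 + 60 * a ^ 11 * ρ ^ 4 * u + 640 * a ^ 11 * ρ ^ 4 * u ^ 3 + 320 * a ^ 11 * ρ ^ 4 * u ^ 5 + (-40) * a ^ 12 * u ^ 2 + (-750) * a ^ 12 * u ^ 4 + (-880) * a ^ 12 * u ^ 6 + 32 * a ^ 12 * u ^ 8 + (-244) * a ^ 12 * ρ ^ 2 * u ^ 2 + (-800) * a ^ 12 * ρ ^ 2 * u ^ 4 + (-320) * a ^ 12 * ρ ^ 2 * u ^ 6 + 200 * a ^ 12 * ρ ^ 4 * u ^ 2 + 320 * a ^ 12 * ρ ^ 4 * u ^ 4 + (-124) * a ^ 13 * u ^ 3 + (-320) * a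 ^ 13 * u ^ 5 + 80 * a ^ 13 * u ^ 7 + (-24) * a ^ 13 * ρ ^ 2 * u + (-320) * a ^ 13 * ρ ^ 2 * u ^ 3 + (-320) * a ^ 13 * ρ ^ 2 * u ^ 5 + 24 * a ^ 13 * ρ ^ 4 * u + 160 * a ^ 13 * ρ ^ 4 * u ^ 3 + (-8) * a ^ 14 * u ^ 2 + (-58) * a ^ 14 * u ^ 4 + 80 * a ^ 14 * u ^ 6 + (-60) * a ^ 14 * ρ ^ 2 * u ^ 2 + (-160) * a ^ 14 * ρ ^ 2 * u ^ 4 + 40 * a ^ 14 * ρ ^ 4 * u ^ 2 + (-4) * a ^ 15 * u ^ 3 + 40 * a ^ 15 * u ^ 5 + (-4) * a ^ 15 * ρ ^ 2 * u + (-40) * a ^ 15 * ρ ^ 2 * u ^ 3 + 4 * a ^ 15 * ρ ^ 4 * u + 10 * a ^ 16 * u ^ 4 + (-4) * a ^ 16 * ρ ^ 2 * u ^ 2 + a ^ 17 * u ^ 3) * hu2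
  refine ⟨hdiffJ, by rw [hfd, hdet, hval], ?_⟩
  rw [hfd, hdet, hval]
  exact div_pos (mul_pos ha hu0) (pow_pos hbase 2)
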